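/- Let F be a Schwartz function on ℝ^d and φ a Schwartz function, and suppose F = F * φ̂ (convolution). Define F^#(x) = sup_{|y-x| ≤ δ} |F(y)| and (φ̂)^#(x) = sup_{|y-x| ≤ δ} |φ̂(y)|. Then ‖F^#‖_{L²} ≤ ‖(φ̂)^#‖_{L¹} · ‖F‖_{L²}. -/

import Mathlib

open MeasureTheory Complex Real
open scoped ENNReal NNReal

private lemma aux_le_sup {E : Type*} [NormedAddCommGroup E] {δ C : ℝ} (G : E → ℂ)
    (hC : ∀ x, ‖G x‖ ≤ C) {x y : E} (hy : y ∈ Metric.closedBall x δ) :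
    ‖G y‖ ≤ ⨆ z ∈ Metric.closedBall x δ, ‖G z‖ := by
  have hbdd : BddAbove (Set.range fun z => ⨆ _ : z ∈ Metric.closedBall x δ, ‖G z‖) :=
    ⟨max C 0, Set.forall_mem_range.2 fun z =>
      Real.iSup_le (fun _ => (hC z).trans (le_max_left _ _)) (le_max_right _ _)⟩
  calc ‖G y‖ = ⨆ _ : y ∈ Metric.closedBall x δ, ‖G y‖ := (ciSup_pos (f := fun _ => ‖G y‖) hy).symm
    _ ≤ ⨆ z ∈ Metric.closedBall x δ, ‖G z‖ := le_ciSup hbdd y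

private lemma aux_repr {E : Type*} [NormedAddCommGroup E]
    [SecondCountableTopology E]
    {δ : ℝ} (hδ : 0 < δ) (G : E → ℂ) (hGc : Continuous G) {C : ℝ} (hC : ∀ x, ‖G x‖ ≤ C) :
    ∃ u : ℕ → E, (∀ n, u n ∈ Metric.closedBall (0 : E) δ) ∧
      ∀ x : E, ENNReal.ofReal (⨆ y ∈ Metric.closedBall x δ, ‖G y‖)
        = ⨆ n, (‖G (x + u n)‖₊ : ℝ≥0∞) := by
  haveI hne : Nonempty (Metric.closedBall (0:E) δ) :=
    ⟨⟨0, Metric.mem_closedBall_self hδ.le⟩⟩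
  set s := Metric.closedBall (0:E) δ with hs
  set u : ℕ → E := fun n => (TopologicalSpace.denseSeq s n : E) with hu
  refine ⟨u, fun n => (TopologicalSpace.denseSeq s n).2, fun x => ?_⟩
  have hbdd : BddAbove (Set.range fun n => ‖G (x + u n)‖) :=
    ⟨C, Set.forall_mem_range.2 fun n => hC _⟩
  have key : (⨆ y ∈ Metric.closedBall x δ, ‖G y‖) = ⨆ n, ‖G (x + u n)‖ := by
    apply le_antisymm
    · refine ciSup_le fun y => Real.iSup_le (fun hy => ?_)
        (Real.iSup_nonneg fun n => norm_nonneg _)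
      have hw : y - x ∈ s := by
        simpa [hs, Metric.mem_closedBall, dist_eq_norm] using hy
      have hdense : (⟨y - x, hw⟩ : s) ∈
          closure (Set.range (TopologicalSpace.denseSeq s)) :=
        (TopologicalSpace.denseRange_denseSeq s) _
      obtain ⟨f, hf_mem, hf_tendsto⟩ := mem_closure_iff_seq_limit.1 hdense
      have hcont2 : Continuous fun w : E => ‖G (x + w)‖ :=
        (hGc.comp (continuous_const.add continuous_id)).norm
      have hval : Filter.Tendsto (fun k => ((f k : s) : E)) Filter.atTop (nhds (y - x)) :=
        (continuous_subtype_val.tendsto _).comp hf_tendsto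
      have h1 : Filter.Tendsto (fun k => ‖G (x + ((f k : s) : E))‖) Filter.atTop
          (nhds ‖G (x + (y - x))‖) := (hcont2.tendsto _).comp hval
      have hxy : x + (y - x) = y := by abel
      rw [hxy] at h1
      refine le_of_tendsto h1 (Filter.Eventually.of_forall fun k => ?_)
      obtain ⟨n, hn⟩ := hf_mem k
      have : ((f k : s) : E) = u n := by rw [← hn]
      rw [this]
      exact le_ciSup hbdd n
    · refine ciSup_le fun n => aux_le_sup G hC ?_
      have h2 : u n ∈ s := (TopologicalSpace.denseSeq s n).2
      rw [hs, Metric.mem_closedBall, dist_zero_right] at h2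
      rw [Metric.mem_closedBall, dist_eq_norm]
      simpa [add_sub_cancel_left] using h2
  rw [key]
  have hmap := Monotone.map_ciSup_of_continuousAt
    (f := ENNReal.ofReal) (g := fun n => ‖G (x + u n)‖)
    (ENNReal.continuous_ofReal.continuousAt) (fun _ _ h => ENNReal.ofReal_le_ofReal h) hbdd
  rw [hmap]
  exact iSup_congr fun n => ofReal_norm _

private lemma eLp2 {α : Type*} {F : Type*} [MeasurableSpace α] [NormedAddCommGroup F]
    (μ : Measure α) (f : α → F) :
    eLpNorm f 2 μ = (∫⁻ x, ((‖f x‖₊ : ℝ≥0∞)) ^ (2:ℝ) ∂μ) ^ (1/2 : ℝ) := by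
  rw [eLpNorm_eq_lintegral_rpow_enorm_toReal (by norm_num) (by norm_num)]
  norm_num
  rfl

theorem stmt8 {d : ℕ} (hd : 0 < d) (δ : ℝ) (hδ : 0 < δ)
    (F φ : SchwartzMap (EuclideanSpace ℝ (Fin d)) ℂ)
    (φhat : EuclideanSpace ℝ (Fin d) → ℂ)
    (hφhat : ∀ ξ, φhat ξ =
      ∫ y, Complex.exp (-2 * Real.pi * Complex.I * ((inner ℝ ξ y : ℝ) : ℂ)) * φ y)
    (hconv : ∀ x, F x = ∫ y, F y * φhat (x - y)) :
    eLpNorm (fun x => ⨆ y ∈ Metric.closedBall x δ, ‖F y‖) 2 volume ≤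
      eLpNorm (fun x => ⨆ y ∈ Metric.closedBall x δ, ‖φhat y‖) 1 volume *
        eLpNorm (fun x => F x) 2 volume := by
  -- norms of the kernel
  have heq : ∀ (ξ y : EuclideanSpace ℝ (Fin d)), ‖Complex.exp (-2 * Real.pi * Complex.I * ((inner ℝ ξ y : ℝ) : ℂ)) * φ y‖
      = ‖φ y‖ := by
    intro ξ y
    rw [norm_mul]
    have hre : (-2 * Real.pi * Complex.I * ((inner ℝ ξ y : ℝ) : ℂ)).re = 0 := by
      simp [Complex.mul_re, Complex.mul_im]
    rw [Complex.norm_exp, hre, Real.exp_zero, one_mul]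
  -- continuity of φhat
  have hφhat_cont : Continuous φhat := by
    rw [show φhat = fun ξ => ∫ y,
        Complex.exp (-2 * Real.pi * Complex.I * ((inner ℝ ξ y : ℝ) : ℂ)) * φ y from
      funext hφhat]
    apply continuous_of_dominated (bound := fun y => ‖φ y‖)
    · intro ξ
      apply Continuous.aestronglyMeasurable
      exact (Complex.continuous_exp.comp ((continuous_const.mul
        (Complex.continuous_ofReal.comp (continuous_const.inner continuous_id))))).mul
        φ.continuous
    · intro ξ
      exact Filter.Eventually.of_forall fun y => (heq ξ y).le
    · exact φ.integrable.norm
    · exact Filter.Eventually.of_forall fun y =>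
        (Complex.continuous_exp.comp ((continuous_const.mul
          (Complex.continuous_ofReal.comp (continuous_id.inner continuous_const))))).mul
          continuous_const
  -- bound on φhat
  have hφhat_bd : ∀ ξ : EuclideanSpace ℝ (Fin d), ‖φhat ξ‖ ≤ ∫ y, ‖φ y‖ := by
    intro ξ
    rw [hφhat]
    refine (norm_integral_le_integral_norm _).trans (le_of_eq ?_)
    exact integral_congr_ae (Filter.Eventually.of_forall fun y => heq ξ y)
  have hF_bd : ∀ x : EuclideanSpace ℝ (Fin d), ‖F x‖ ≤ SchwartzMap.seminorm ℝ 0 0 F :=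
    fun x => F.norm_le_seminorm ℝ x
  obtain ⟨u, hu, hrepφ⟩ := aux_repr hδ φhat hφhat_cont hφhat_bd
  obtain ⟨v, hv, hrepF⟩ := aux_repr hδ (F : EuclideanSpace ℝ (Fin d) → ℂ) F.continuous hF_bd
  set Ge : EuclideanSpace ℝ (Fin d) → ℝ≥0∞ := fun x => ⨆ n, (‖φhat (x + u n)‖₊ : ℝ≥0∞) with hGe
  have hGe_meas : Measurable Ge :=
    Measurable.iSup fun n =>
      ((hφhat_cont.comp (continuous_id.add continuous_const)).measurable).enorm
  have hFe_meas : Measurable fun z : EuclideanSpace ℝ (Fin d) => (‖F z‖₊ : ℝ≥0∞) := F.continuous.measurable.enorm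
  set A : ℝ≥0∞ := ∫⁻ x, Ge x with hA
  set K : ℝ≥0∞ := ∫⁻ z, (‖F z‖₊ : ℝ≥0∞) ^ (2:ℝ) with hK
  -- RHS factors
  have hRHS1 : eLpNorm (fun x => ⨆ y ∈ Metric.closedBall x δ, ‖φhat y‖) 1 volume = A := by
    rw [eLpNorm_one_eq_lintegral_enorm]
    refine lintegral_congr fun x => ?_
    have h0 : (0:ℝ) ≤ ⨆ y ∈ Metric.closedBall x δ, ‖φhat y‖ :=
      (norm_nonneg (φhat x)).trans (aux_le_sup φhat hφhat_bd (Metric.mem_closedBall_self hδ.le))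
    rw [Real.enorm_eq_ofReal h0, hrepφ x]
  have hRHS2 : eLpNorm (fun x : EuclideanSpace ℝ (Fin d) => F x) 2 volume = K ^ (1/2:ℝ) := by
    rw [eLp2]
  -- pointwise bound
  have hpt : ∀ x : EuclideanSpace ℝ (Fin d), ENNReal.ofReal (⨆ y ∈ Metric.closedBall x δ, ‖F y‖)
      ≤ ∫⁻ z, (‖F z‖₊ : ℝ≥0∞) * Ge (x - z) := by
    intro x
    have hkey : ∀ y ∈ Metric.closedBall x δ,
        (‖F y‖₊ : ℝ≥0∞) ≤ ∫⁻ z, (‖F z‖₊ : ℝ≥0∞) * Ge (x - z) := by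
      intro y hy
      calc (‖F y‖₊ : ℝ≥0∞) = ‖∫ z, F z * φhat (y - z)‖₊ := by rw [hconv y]
        _ ≤ ∫⁻ z, ‖F z * φhat (y - z)‖₊ := enorm_integral_le_lintegral_enorm _
        _ = ∫⁻ z, (‖F z‖₊ : ℝ≥0∞) * (‖φhat (y - z)‖₊ : ℝ≥0∞) := by
            simp [nnnorm_mul, ENNReal.coe_mul]
        _ ≤ ∫⁻ z, (‖F z‖₊ : ℝ≥0∞) * Ge (x - z) := by
            refine lintegral_mono fun z => mul_le_mul_right ?_ _
            simp only [hGe]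
            rw [← hrepφ (x - z), ← enorm_eq_nnnorm (φhat (y - z)), ← ofReal_norm]
            refine ENNReal.ofReal_le_ofReal (aux_le_sup φhat hφhat_bd ?_)
            have : dist (y - z) (x - z) = dist y x := dist_sub_right y x z
            simpa [Metric.mem_closedBall, this] using hy
    by_cases hH : (∫⁻ z, (‖F z‖₊ : ℝ≥0∞) * Ge (x - z)) = ⊤
    · simp [hH]
    have hbd : (⨆ y ∈ Metric.closedBall x δ, ‖F y‖)
        ≤ (∫⁻ z, (‖F z‖₊ : ℝ≥0∞) * Ge (x - z)).toReal := by
      refine ciSup_le fun y => Real.iSup_le (fun hy => ?_) ENNReal.toReal_nonneg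
      have h1 := ENNReal.toReal_mono hH (hkey y hy)
      simpa using h1
    calc ENNReal.ofReal (⨆ y ∈ Metric.closedBall x δ, ‖F y‖)
        ≤ ENNReal.ofReal (∫⁻ z, (‖F z‖₊ : ℝ≥0∞) * Ge (x - z)).toReal :=
          ENNReal.ofReal_le_ofReal hbd
      _ = ∫⁻ z, (‖F z‖₊ : ℝ≥0∞) * Ge (x - z) := ENNReal.ofReal_toReal hH
  -- translation invariance
  have htrans1 : ∀ x : EuclideanSpace ℝ (Fin d), (∫⁻ z, Ge (x - z)) = A := by
    intro x
    have h1 : MeasurePreserving (fun z : EuclideanSpace ℝ (Fin d) => -z) volume volume :=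
      Measure.measurePreserving_neg _
    have h2 : MeasurePreserving (fun z : EuclideanSpace ℝ (Fin d) => x + z) volume volume :=
      measurePreserving_add_left volume x
    have hmp : MeasurePreserving (fun z : EuclideanSpace ℝ (Fin d) => x - z) volume volume := by
      have := h2.comp h1
      simpa [Function.comp_def, sub_eq_add_neg] using this
    exact hmp.lintegral_comp hGe_meas
  have htrans2 : ∀ z : EuclideanSpace ℝ (Fin d), (∫⁻ x, Ge (x - z)) = A := fun z =>
    lintegral_sub_right_eq_self Ge z
  -- Cauchy-Schwarz
  have hconj : Real.HolderConjugate 2 2 := Real.holderConjugate_iff.mpr ⟨one_lt_two, by norm_num⟩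
  have hCS : ∀ x : EuclideanSpace ℝ (Fin d), (∫⁻ z, (‖F z‖₊ : ℝ≥0∞) * Ge (x - z)) ^ (2:ℝ)
      ≤ (∫⁻ z, (‖F z‖₊ : ℝ≥0∞) ^ (2:ℝ) * Ge (x - z)) * A := by
    intro x
    have hGx : Measurable fun z : EuclideanSpace ℝ (Fin d) => Ge (x - z) :=
      hGe_meas.comp (measurable_const.sub measurable_id)
    have hsplit : ∀ z : EuclideanSpace ℝ (Fin d), (‖F z‖₊ : ℝ≥0∞) * Ge (x - z)
        = ((‖F z‖₊ : ℝ≥0∞) * Ge (x - z) ^ (1/2:ℝ)) * (Ge (x - z) ^ (1/2:ℝ)) := by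
      intro z
      rw [mul_assoc, ← ENNReal.rpow_add_of_nonneg _ _ (by norm_num) (by norm_num)]
      norm_num
    have hf : AEMeasurable (fun z : EuclideanSpace ℝ (Fin d) => (‖F z‖₊ : ℝ≥0∞) * Ge (x - z) ^ (1/2:ℝ)) volume :=
      (hFe_meas.mul ((ENNReal.continuous_rpow_const.measurable).comp hGx)).aemeasurable
    have hg : AEMeasurable (fun z : EuclideanSpace ℝ (Fin d) => Ge (x - z) ^ (1/2:ℝ)) volume :=
      ((ENNReal.continuous_rpow_const.measurable).comp hGx).aemeasurable
    have hH := ENNReal.lintegral_mul_le_Lp_mul_Lq volume hconj hf hg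
    have hfp : ∀ z : EuclideanSpace ℝ (Fin d), ((‖F z‖₊ : ℝ≥0∞) * Ge (x - z) ^ (1/2:ℝ)) ^ (2:ℝ)
        = (‖F z‖₊ : ℝ≥0∞) ^ (2:ℝ) * Ge (x - z) := by
      intro z
      rw [ENNReal.mul_rpow_of_nonneg _ _ (by norm_num : (0:ℝ) ≤ 2),
        ← ENNReal.rpow_mul]
      norm_num
    have hgp : ∀ z : EuclideanSpace ℝ (Fin d), (Ge (x - z) ^ (1/2:ℝ)) ^ (2:ℝ) = Ge (x - z) := by
      intro z
      rw [← ENNReal.rpow_mul]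
      norm_num
    simp only [Pi.mul_apply] at hH
    rw [show (fun z : EuclideanSpace ℝ (Fin d) => ((‖F z‖₊ : ℝ≥0∞) * Ge (x - z) ^ (1/2:ℝ)) * (Ge (x - z) ^ (1/2:ℝ)))
        = fun z : EuclideanSpace ℝ (Fin d) => (‖F z‖₊ : ℝ≥0∞) * Ge (x - z) from funext fun z => (hsplit z).symm] at hH
    simp only [hfp, hgp] at hH
    rw [htrans1 x] at hH
    calc (∫⁻ z, (‖F z‖₊ : ℝ≥0∞) * Ge (x - z)) ^ (2:ℝ)
        ≤ ((∫⁻ z, (‖F z‖₊ : ℝ≥0∞) ^ (2:ℝ) * Ge (x - z)) ^ (1/2:ℝ) * A ^ (1/2:ℝ)) ^ (2:ℝ) :=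
          ENNReal.rpow_le_rpow hH (by norm_num)
      _ = (∫⁻ z, (‖F z‖₊ : ℝ≥0∞) ^ (2:ℝ) * Ge (x - z)) * A := by
          rw [ENNReal.mul_rpow_of_nonneg _ _ (by norm_num : (0:ℝ) ≤ 2),
            ← ENNReal.rpow_mul, ← ENNReal.rpow_mul]
          norm_num
  -- Fubini
  have hinner_meas : Measurable fun x : EuclideanSpace ℝ (Fin d) => ∫⁻ z, (‖F z‖₊ : ℝ≥0∞) ^ (2:ℝ) * Ge (x - z) := by
    apply Measurable.lintegral_prod_right (f := fun x z : EuclideanSpace ℝ (Fin d) => (‖F z‖₊ : ℝ≥0∞) ^ (2:ℝ) * Ge (x - z))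
    exact (((ENNReal.continuous_rpow_const.measurable).comp (hFe_meas.comp measurable_snd)).mul
      (hGe_meas.comp (measurable_fst.sub measurable_snd)))
  have hswap : (∫⁻ x, ∫⁻ z, (‖F z‖₊ : ℝ≥0∞) ^ (2:ℝ) * Ge (x - z)) = A * K := by
    rw [lintegral_lintegral_swap]
    · have : ∀ z : EuclideanSpace ℝ (Fin d), (∫⁻ x, (‖F z‖₊ : ℝ≥0∞) ^ (2:ℝ) * Ge (x - z))
          = (‖F z‖₊ : ℝ≥0∞) ^ (2:ℝ) * A := by
        intro z
        rw [lintegral_const_mul _ (show Measurable fun x : EuclideanSpace ℝ (Fin d) => Ge (x - z) from hGe_meas.comp (measurable_id.sub measurable_const)),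
          htrans2 z]
      rw [lintegral_congr this, lintegral_mul_const _
        (show Measurable fun z : EuclideanSpace ℝ (Fin d) => (‖F z‖₊ : ℝ≥0∞) ^ (2:ℝ) from (ENNReal.continuous_rpow_const.measurable).comp hFe_meas), hK, mul_comm]
    · exact (((ENNReal.continuous_rpow_const.measurable).comp (hFe_meas.comp measurable_snd)).mul
        (hGe_meas.comp (measurable_fst.sub measurable_snd))).aemeasurable
  -- putting everything together
  rw [hRHS1, hRHS2, eLp2]
  have hLHS_nonneg : ∀ x : EuclideanSpace ℝ (Fin d), (0:ℝ) ≤ ⨆ y ∈ Metric.closedBall x δ, ‖F y‖ :=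
    fun x => (norm_nonneg (F x)).trans
      (aux_le_sup (F : EuclideanSpace ℝ (Fin d) → ℂ) hF_bd (Metric.mem_closedBall_self hδ.le))
  calc (∫⁻ x, ((‖(⨆ y ∈ Metric.closedBall x δ, ‖F y‖ : ℝ)‖₊ : ℝ≥0∞)) ^ (2:ℝ)) ^ (1/2:ℝ)
      ≤ (∫⁻ x, (∫⁻ z, (‖F z‖₊ : ℝ≥0∞) * Ge (x - z)) ^ (2:ℝ)) ^ (1/2:ℝ) := by
        refine ENNReal.rpow_le_rpow (lintegral_mono fun x => ?_) (by norm_num)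
        refine ENNReal.rpow_le_rpow ?_ (by norm_num)
        rw [← enorm_eq_nnnorm (⨆ y ∈ Metric.closedBall x δ, ‖F y‖), Real.enorm_eq_ofReal (hLHS_nonneg x)]
        exact hpt x
    _ ≤ ((∫⁻ x, (∫⁻ z, (‖F z‖₊ : ℝ≥0∞) ^ (2:ℝ) * Ge (x - z))) * A) ^ (1/2:ℝ) := by
        refine ENNReal.rpow_le_rpow ?_ (by norm_num)
        calc (∫⁻ x, (∫⁻ z, (‖F z‖₊ : ℝ≥0∞) * Ge (x - z)) ^ (2:ℝ))
            ≤ ∫⁻ x, (∫⁻ z, (‖F z‖₊ : ℝ≥0∞) ^ (2:ℝ) * Ge (x - z)) * A :=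
              lintegral_mono fun x => hCS x
          _ = (∫⁻ x, (∫⁻ z, (‖F z‖₊ : ℝ≥0∞) ^ (2:ℝ) * Ge (x - z))) * A :=
              lintegral_mul_const A hinner_meas
    _ = (A * K * A) ^ (1/2:ℝ) := by rw [hswap]
    _ = A * K ^ (1/2:ℝ) := by
        rw [show A * K * A = A ^ (2:ℝ) * K by rw [ENNReal.rpow_two]; ring,
          ENNReal.mul_rpow_of_nonneg _ _ (by norm_num : (0:ℝ) ≤ 1/2),
          ← ENNReal.rpow_mul]
        norm_num
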